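/- Let $H$ be a Hilbert space and let $f \in L^2(\mathbb{R}_+, dt/t; H)$. Define $Lf(t) := t\,\widehat f(t)$, where $\widehat f(t) = \int_0^\infty e^{-st} f(s)\,ds$ is the Laplace transform of $f$. Then $Lf$ belongs to $L^2(\mathbb{R}_+, dt/t; H)$ and $\|Lf\|_{L^2(\mathbb{R}_+, dt/t; H)} \le \|f\|_{L^2(\mathbb{R}_+, dt/t; H)}$. -/

import Mathlib

open MeasureTheory Set
open scoped ENNReal NNReal

/-- The measure `dt/t` on `(0,∞)`. -/
noncomputable def muLog : Measure ℝ :=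
  (volume.restrict (Ioi (0:ℝ))).withDensity (fun t => ENNReal.ofReal t⁻¹)

namespace LapAux

noncomputable def Kk (t s : ℝ) : ℝ≥0∞ :=
  ENNReal.ofReal (t * Real.exp (-(s * t))) * ENNReal.ofReal s

lemma Kk_meas : Measurable (Function.uncurry Kk) := by
  show Measurable fun p : ℝ × ℝ => Kk p.1 p.2; unfold Kk; fun_prop

lemma Kk_meas_right (t : ℝ) : Measurable (Kk t) := by
  unfold Kk; fun_prop

lemma Kk_meas_left (s : ℝ) : Measurable (fun t => Kk t s) := by
  unfold Kk; fun_prop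

lemma muLog_lintegral (h : ℝ → ℝ≥0∞) (hh : Measurable h) :
    ∫⁻ s, h s ∂muLog = ∫⁻ s in Ioi (0:ℝ), ENNReal.ofReal s⁻¹ * h s := by
  rw [muLog, lintegral_withDensity_eq_lintegral_mul _ (by fun_prop) hh]; rfl

lemma marg {t : ℝ} (ht : 0 < t) :
    ∫⁻ s in Ioi (0:ℝ), ENNReal.ofReal (t * Real.exp (-(s * t))) = 1 := by
  have hint : IntegrableOn (fun s : ℝ => t * Real.exp (-(s * t))) (Ioi 0) := by
    have h1 := (exp_neg_integrableOn_Ioi 0 ht).const_mul t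
    exact IntegrableOn.congr_fun h1 (fun s _ => by rw [neg_mul, mul_comm t s]) measurableSet_Ioi
  rw [← MeasureTheory.ofReal_integral_eq_lintegral_ofReal hint
      (Filter.Eventually.of_forall fun s => by positivity)]
  have : ∫ s in Ioi (0:ℝ), t * Real.exp (-(s * t)) = 1 := by
    rw [MeasureTheory.integral_const_mul]
    have h2 : ∫ s in Ioi (0:ℝ), Real.exp (-(s * t)) =
        ∫ s in Ioi (0:ℝ), (fun x => Real.exp (-x)) (t * s) := by
      congr 1; ext s; rw [mul_comm s t]
    rw [h2, integral_comp_mul_left_Ioi (fun x => Real.exp (-x)) 0 ht, mul_zero,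
      integral_exp_neg_Ioi_zero, smul_eq_mul, mul_one, mul_inv_cancel₀ ht.ne']
  rw [this, ENNReal.ofReal_one]

lemma kernel_lint {t : ℝ} (ht : 0 < t) (N : ℝ → ℝ≥0∞) (hN : Measurable N) :
    ∫⁻ s, Kk t s * N s ∂muLog
      = ∫⁻ s in Ioi (0:ℝ), ENNReal.ofReal (t * Real.exp (-(s * t))) * N s := by
  rw [muLog_lintegral (fun s => Kk t s * N s) ((Kk_meas_right t).mul hN)]
  refine setLIntegral_congr_fun measurableSet_Ioi (fun s hs => ?_)
  have hs' : (0:ℝ) < s := hs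
  show ENNReal.ofReal s⁻¹ * (ENNReal.ofReal (t * Real.exp (-(s * t))) * ENNReal.ofReal s * N s) = _
  rw [show ENNReal.ofReal s⁻¹ * (ENNReal.ofReal (t * Real.exp (-(s * t))) * ENNReal.ofReal s * N s)
      = (ENNReal.ofReal s⁻¹ * ENNReal.ofReal s) * (ENNReal.ofReal (t * Real.exp (-(s * t))) * N s)
      by ring, ← ENNReal.ofReal_mul (by positivity), inv_mul_cancel₀ hs'.ne',
    ENNReal.ofReal_one, one_mul]

lemma kernel_total {t : ℝ} (ht : 0 < t) : ∫⁻ s, Kk t s ∂muLog = 1 := by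
  have := kernel_lint ht (fun _ => 1) measurable_const
  simpa [marg ht] using this

lemma kernel_total' {s : ℝ} (hs : 0 < s) : ∫⁻ t, Kk t s ∂muLog = 1 := by
  rw [muLog_lintegral _ (Kk_meas_left s)]
  have : ∫⁻ t in Ioi (0:ℝ), ENNReal.ofReal t⁻¹ * Kk t s
      = ∫⁻ t in Ioi (0:ℝ), ENNReal.ofReal (s * Real.exp (-(t * s))) := by
    refine setLIntegral_congr_fun measurableSet_Ioi (fun t ht => ?_)
    have ht' : (0:ℝ) < t := ht
    rw [Kk, ← ENNReal.ofReal_mul (by positivity), ← ENNReal.ofReal_mul (by positivity)]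
    congr 1
    have hE : Real.exp (-(t * s)) = Real.exp (-(s * t)) := by rw [mul_comm]
    rw [hE]
    field_simp
  rw [this, marg hs]

lemma CS {t : ℝ} (ht : 0 < t) (N : ℝ → ℝ≥0∞) (hN : Measurable N) :
    (∫⁻ s, Kk t s * N s ∂muLog) ^ (2:ℝ) ≤ ∫⁻ s, Kk t s * N s ^ (2:ℝ) ∂muLog := by
  have hconj : Real.HolderConjugate 2 2 := ⟨by norm_num, by norm_num, by norm_num⟩
  have hKhalf : Measurable (fun s => Kk t s ^ (1/2:ℝ)) :=
    ENNReal.continuous_rpow_const.measurable.comp (Kk_meas_right t)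
  have h := ENNReal.lintegral_mul_le_Lp_mul_Lq muLog hconj hKhalf.aemeasurable
    (hKhalf.mul hN).aemeasurable
  have e1 : ∀ s, (Kk t s ^ (1/2:ℝ)) * (Kk t s ^ (1/2:ℝ) * N s) = Kk t s * N s := by
    intro s
    rw [← mul_assoc, ← ENNReal.rpow_add_of_nonneg _ _ (by norm_num) (by norm_num)]
    norm_num
  have e2 : ∀ s, (Kk t s ^ (1/2:ℝ)) ^ (2:ℝ) = Kk t s := by
    intro s; rw [← ENNReal.rpow_mul]; norm_num
  have e3 : ∀ s, (Kk t s ^ (1/2:ℝ) * N s) ^ (2:ℝ) = Kk t s * N s ^ (2:ℝ) := by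
    intro s
    rw [ENNReal.mul_rpow_of_nonneg _ _ (by norm_num), ← ENNReal.rpow_mul]
    norm_num
  simp only [Pi.mul_apply, e1, e2, e3, kernel_total ht, ENNReal.one_rpow, one_mul] at h
  calc (∫⁻ s, Kk t s * N s ∂muLog) ^ (2:ℝ)
      ≤ ((∫⁻ s, Kk t s * N s ^ (2:ℝ) ∂muLog) ^ (1/2:ℝ)) ^ (2:ℝ) :=
        ENNReal.rpow_le_rpow h (by norm_num)
    _ = ∫⁻ s, Kk t s * N s ^ (2:ℝ) ∂muLog := by
        rw [← ENNReal.rpow_mul]; norm_num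

instance : SigmaFinite muLog := by
  unfold muLog; infer_instance

lemma muLog_ac : muLog ≪ volume.restrict (Ioi (0:ℝ)) :=
  withDensity_absolutelyContinuous _ _

lemma restrict_ac : volume.restrict (Ioi (0:ℝ)) ≪ muLog := by
  have h : muLog.withDensity (fun s => ENNReal.ofReal s) = volume.restrict (Ioi (0:ℝ)) := by
    rw [muLog, ← withDensity_mul _ (by fun_prop) (by fun_prop)]
    have he : ((fun t : ℝ => ENNReal.ofReal t⁻¹) * fun s : ℝ => ENNReal.ofReal s)
        =ᵐ[volume.restrict (Ioi (0:ℝ))] 1 := by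
      filter_upwards [ae_restrict_mem measurableSet_Ioi] with s hs
      have hs' : (0:ℝ) < s := hs
      show ENNReal.ofReal s⁻¹ * ENNReal.ofReal s = 1
      rw [← ENNReal.ofReal_mul (by positivity), inv_mul_cancel₀ hs'.ne', ENNReal.ofReal_one]
    rw [withDensity_congr_ae he, withDensity_one]
  rw [← h]
  exact withDensity_absolutelyContinuous _ _

lemma key {H : Type*} [NormedAddCommGroup H] [NormedSpace ℝ H] [CompleteSpace H]
    (f : ℝ → H) (hsm : StronglyMeasurable f) (hf : MemLp f 2 muLog) :
    MemLp (fun t => t • ∫ s in Ioi (0:ℝ), Real.exp (-(s * t)) • f s) 2 muLog ∧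
    eLpNorm (fun t => t • ∫ s in Ioi (0:ℝ), Real.exp (-(s * t)) • f s) 2 muLog
      ≤ eLpNorm f 2 muLog := by
  set N : ℝ → ℝ≥0∞ := fun s => (‖f s‖₊ : ℝ≥0∞) with hN_def
  have hN : Measurable N := hsm.enorm
  set Lf : ℝ → H := fun t => t • ∫ s in Ioi (0:ℝ), Real.exp (-(s * t)) • f s with hLf_def
  have hmem_pos : ∀ᵐ t ∂muLog, t ∈ Ioi (0:ℝ) :=
    muLog_ac.ae_le (ae_restrict_mem measurableSet_Ioi)
  -- Step A: pointwise bound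
  have stepA : ∀ᵐ t ∂muLog, (‖Lf t‖₊ : ℝ≥0∞) ≤ ∫⁻ s, Kk t s * N s ∂muLog := by
    filter_upwards [hmem_pos] with t ht
    have ht' : (0:ℝ) < t := ht
    calc (‖Lf t‖₊ : ℝ≥0∞)
        = ENNReal.ofReal t * (‖∫ s in Ioi (0:ℝ), Real.exp (-(s * t)) • f s‖₊ : ℝ≥0∞) := by
          rw [hLf_def]
          simp only [nnnorm_smul, ENNReal.coe_mul, ← enorm_eq_nnnorm, Real.enorm_eq_ofReal ht'.le]
      _ ≤ ENNReal.ofReal t * ∫⁻ s in Ioi (0:ℝ), (‖Real.exp (-(s * t)) • f s‖₊ : ℝ≥0∞) :=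
          mul_le_mul_right (enorm_integral_le_lintegral_enorm _) _
      _ = ∫⁻ s in Ioi (0:ℝ), ENNReal.ofReal (t * Real.exp (-(s * t))) * N s := by
          rw [← lintegral_const_mul' _ _ ENNReal.ofReal_ne_top]
          refine setLIntegral_congr_fun measurableSet_Ioi
            (fun s hs => ?_)
          rw [nnnorm_smul, ENNReal.coe_mul, ← mul_assoc, ← enorm_eq_nnnorm,
            Real.enorm_eq_ofReal (Real.exp_pos _).le,
            ← ENNReal.ofReal_mul ht'.le]
      _ = ∫⁻ s, Kk t s * N s ∂muLog := (kernel_lint ht' N hN).symm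
  -- Step B: squared bound
  have stepB : ∀ᵐ t ∂muLog, (‖Lf t‖₊ : ℝ≥0∞) ^ (2:ℝ) ≤ ∫⁻ s, Kk t s * N s ^ (2:ℝ) ∂muLog := by
    filter_upwards [stepA, hmem_pos] with t hA ht
    exact le_trans (ENNReal.rpow_le_rpow hA (by norm_num)) (CS ht N hN)
  -- Step C: integrate and swap
  have stepC : ∫⁻ t, (‖Lf t‖₊ : ℝ≥0∞) ^ (2:ℝ) ∂muLog ≤ ∫⁻ s, N s ^ (2:ℝ) ∂muLog := by
    have hswap : ∫⁻ t, ∫⁻ s, Kk t s * N s ^ (2:ℝ) ∂muLog ∂muLog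
        = ∫⁻ s, ∫⁻ t, Kk t s * N s ^ (2:ℝ) ∂muLog ∂muLog := by
      apply lintegral_lintegral_swap
      exact (Kk_meas.mul ((ENNReal.continuous_rpow_const.measurable.comp
        (hN.comp measurable_snd)))).aemeasurable
    calc ∫⁻ t, (‖Lf t‖₊ : ℝ≥0∞) ^ (2:ℝ) ∂muLog
        ≤ ∫⁻ t, ∫⁻ s, Kk t s * N s ^ (2:ℝ) ∂muLog ∂muLog := lintegral_mono_ae stepB
      _ = ∫⁻ s, ∫⁻ t, Kk t s * N s ^ (2:ℝ) ∂muLog ∂muLog := hswap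
      _ = ∫⁻ s, N s ^ (2:ℝ) ∂muLog := by
          refine lintegral_congr_ae ?_
          filter_upwards [hmem_pos] with s hs
          rw [lintegral_mul_const'' _ (Kk_meas_left s).aemeasurable, kernel_total' hs, one_mul]
  -- measurability of Lf
  have hI : AEStronglyMeasurable
      (fun t => ∫ s in Ioi (0:ℝ), Real.exp (-(s * t)) • f s) (volume.restrict (Ioi (0:ℝ))) := by
    have hprod : StronglyMeasurable (fun p : ℝ × ℝ => Real.exp (-(p.2 * p.1)) • f p.2) :=
      (Continuous.stronglyMeasurable (by fun_prop)).smul (hsm.comp_measurable measurable_snd)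
    exact hprod.integral_prod_right'.aestronglyMeasurable
  have hLf_meas : AEStronglyMeasurable Lf muLog := by
    refine AEStronglyMeasurable.mono_ac muLog_ac ?_
    exact aestronglyMeasurable_id.smul hI
  -- conclude
  have hbound : eLpNorm Lf 2 muLog ≤ eLpNorm f 2 muLog := by
    rw [eLpNorm_eq_lintegral_rpow_enorm_toReal (by norm_num) (by norm_num),
      eLpNorm_eq_lintegral_rpow_enorm_toReal (by norm_num) (by norm_num)]
    simp only [ENNReal.toReal_ofNat]
    exact ENNReal.rpow_le_rpow stepC (by norm_num)
  exact ⟨⟨hLf_meas, lt_of_le_of_lt hbound hf.2⟩, hbound⟩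

end LapAux

/-- The Laplace-transform contraction on `L²((0,∞), dt/t; H)`:
if `f ∈ L²(dt/t; H)` then `Lf(t) = t ∫₀^∞ e^{-st} f(s) ds` belongs to `L²(dt/t; H)`
and `‖Lf‖ ≤ ‖f‖`. -/
theorem stmt_0 {H : Type*} [NormedAddCommGroup H] [InnerProductSpace ℝ H] [CompleteSpace H]
    (f : ℝ → H) (hf : MemLp f 2 muLog) :
    MemLp (fun t => t • ∫ s in Ioi (0:ℝ), Real.exp (-(s * t)) • f s) 2 muLog ∧
    eLpNorm (fun t => t • ∫ s in Ioi (0:ℝ), Real.exp (-(s * t)) • f s) 2 muLog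
      ≤ eLpNorm f 2 muLog := by
  obtain ⟨g, hg_sm, hfg⟩ := hf.1
  have hfg0 : f =ᵐ[volume.restrict (Ioi (0:ℝ))] g := LapAux.restrict_ac.ae_le hfg
  have hEq : (fun t => t • ∫ s in Ioi (0:ℝ), Real.exp (-(s * t)) • f s)
      = fun t => t • ∫ s in Ioi (0:ℝ), Real.exp (-(s * t)) • g s := by
    funext t
    congr 1
    refine integral_congr_ae ?_
    filter_upwards [hfg0] with s hs
    rw [hs]
  have hgmem : MemLp g 2 muLog := hf.ae_eq hfg
  have hnorm : eLpNorm g 2 muLog = eLpNorm f 2 muLog := eLpNorm_congr_ae hfg.symm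
  rw [hEq, ← hnorm]
  exact LapAux.key g hg_sm hgmem
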